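/- Let α ∈ (0,2) and let Λ(dx) = (Γ(2-α)Γ(α))^{-1} x^{1-α}(1-x)^{α-1} 1_{(0,1)}(x) dx be the Beta(2-α, α) measure. For integers i ≥ 1 and j ≥ 1, the jump rate Γ̃_{i,i+j} := C(i+j, j+1) ∫_0^1 x^{j-1}(1-x)^i Λ(dx) equals (1/(α Γ(α))) · (Γ(i+α)/Γ(i)) · (α/Γ(2-α)) · (Γ(j-α+1)/Γ(j+2)). -/

import Mathlib

open Real

lemma real_beta (a b : ℝ) (ha : 0 < a) (hb : 0 < b) :
    ∫ x in (0:ℝ)..1, x ^ (a - 1) * (1 - x) ^ (b - 1) =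
      Real.Gamma a * Real.Gamma b / Real.Gamma (a + b) := by
  have hab : 0 < a + b := by linarith
  have hcomplex := Complex.Gamma_mul_Gamma_eq_betaIntegral
    (s := (a : ℂ)) (t := (b : ℂ)) (by simpa using ha) (by simpa using hb)
  have hbeta : Complex.betaIntegral (a : ℂ) (b : ℂ) =
      ((∫ x in (0:ℝ)..1, x ^ (a - 1) * (1 - x) ^ (b - 1) : ℝ) : ℂ) := by
    rw [Complex.betaIntegral, ← intervalIntegral.integral_ofReal]
    refine intervalIntegral.integral_congr fun x hx => ?_
    rw [Set.uIcc_of_le zero_le_one] at hx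
    have hx0 : (0:ℝ) ≤ x := hx.1
    have hx1 : (0:ℝ) ≤ 1 - x := by linarith [hx.2]
    rw [Complex.ofReal_mul, Complex.ofReal_cpow hx0, Complex.ofReal_cpow hx1]
    push_cast
    ring
  have hne : Complex.Gamma ((a:ℂ) + b) ≠ 0 := by
    rw [← Complex.ofReal_add, Complex.Gamma_ofReal]
    exact_mod_cast Real.Gamma_pos_of_pos hab |>.ne'
  rw [hbeta] at hcomplex
  have : ((Real.Gamma a * Real.Gamma b : ℝ) : ℂ) =
      ((Real.Gamma (a + b) * ∫ x in (0:ℝ)..1, x ^ (a - 1) * (1 - x) ^ (b - 1) : ℝ) : ℂ) := by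
    push_cast
    rw [← Complex.Gamma_ofReal, ← Complex.Gamma_ofReal, ← Complex.Gamma_ofReal]
    push_cast
    exact hcomplex
  have h2 := Complex.ofReal_injective this
  have hgne : Real.Gamma (a + b) ≠ 0 := (Real.Gamma_pos_of_pos hab).ne'
  field_simp
  linarith [h2]

theorem stmt_4 (α : ℝ) (hα : α ∈ Set.Ioo (0:ℝ) 2) (i j : ℕ) (hi : 1 ≤ i) (hj : 1 ≤ j) :
    ((i + j).choose (j + 1) : ℝ) *
        ∫ x in Set.Ioo (0:ℝ) 1,
          x ^ (j - 1) * (1 - x) ^ i *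
            ((Real.Gamma (2 - α) * Real.Gamma α)⁻¹ * x ^ (1 - α) * (1 - x) ^ (α - 1)) =
      (1 / (α * Real.Gamma α)) * (Real.Gamma ((i : ℝ) + α) / Real.Gamma (i : ℝ)) *
        (α / Real.Gamma (2 - α)) * (Real.Gamma ((j : ℝ) - α + 1) / Real.Gamma ((j : ℝ) + 2)) := by
  obtain ⟨hα0, hα2⟩ := hα
  set c : ℝ := (Real.Gamma (2 - α) * Real.Gamma α)⁻¹ with hc
  have hj1 : (1:ℝ) ≤ (j:ℝ) := by exact_mod_cast hj
  have hi1 : (1:ℝ) ≤ (i:ℝ) := by exact_mod_cast hi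
  have ha : 0 < (j:ℝ) - α + 1 := by linarith
  have hb : 0 < (i:ℝ) + α := by linarith
  -- rewrite the integrand on Ioo
  have hcong : ∫ x in Set.Ioo (0:ℝ) 1,
      x ^ (j - 1) * (1 - x) ^ i * (c * x ^ (1 - α) * (1 - x) ^ (α - 1)) =
      ∫ x in Set.Ioo (0:ℝ) 1,
      c * (x ^ (((j:ℝ) - α + 1) - 1) * (1 - x) ^ (((i:ℝ) + α) - 1)) := by
    refine MeasureTheory.setIntegral_congr_fun measurableSet_Ioo fun x hx => ?_
    have hx0 : 0 < x := hx.1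
    have hx1 : (0:ℝ) < 1 - x := by linarith [hx.2]
    rw [← Real.rpow_natCast x (j - 1), ← Real.rpow_natCast (1 - x) i,
      show ((j - 1 : ℕ) : ℝ) = (j:ℝ) - 1 by push_cast [hj]; ring]
    rw [show (x : ℝ) ^ (((j:ℝ) - α + 1) - 1) = x ^ (((j:ℝ) - 1) + (1 - α)) by ring_nf,
      show (1 - x : ℝ) ^ (((i:ℝ) + α) - 1) = (1 - x) ^ ((i:ℝ) + (α - 1)) by ring_nf]
    rw [Real.rpow_add hx0, Real.rpow_add hx1]
    ring
  rw [hcong]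
  have hIoo : ∫ x in Set.Ioo (0:ℝ) 1,
      c * (x ^ (((j:ℝ) - α + 1) - 1) * (1 - x) ^ (((i:ℝ) + α) - 1)) =
      ∫ x in (0:ℝ)..1,
      c * (x ^ (((j:ℝ) - α + 1) - 1) * (1 - x) ^ (((i:ℝ) + α) - 1)) := by
    rw [intervalIntegral.integral_of_le zero_le_one,
      ← MeasureTheory.integral_Ioc_eq_integral_Ioo]
  rw [hIoo, intervalIntegral.integral_const_mul, real_beta _ _ ha hb]
  have hsum : ((j:ℝ) - α + 1) + ((i:ℝ) + α) = ((i + j : ℕ) : ℝ) + 1 := by push_cast; ring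
  rw [hsum, Real.Gamma_nat_eq_factorial]
  -- Gamma values at naturals
  have hGi : Real.Gamma (i:ℝ) = (i - 1).factorial := by
    rw [show (i:ℝ) = ((i - 1 : ℕ) : ℝ) + 1 by push_cast [hi]; ring,
      Real.Gamma_nat_eq_factorial]
  have hGj : Real.Gamma ((j:ℝ) + 2) = (j + 1).factorial := by
    rw [show (j:ℝ) + 2 = ((j + 1 : ℕ) : ℝ) + 1 by push_cast; ring,
      Real.Gamma_nat_eq_factorial]
  rw [hGi, hGj]
  have hchoose : ((i + j).choose (j + 1) : ℝ) * (j + 1).factorial * (i - 1).factorial =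
      (i + j).factorial := by
    have h := Nat.choose_mul_factorial_mul_factorial
      (show j + 1 ≤ i + j by omega) (n := i + j)
    have : i + j - (j + 1) = i - 1 := by omega
    rw [this] at h
    exact_mod_cast h
  have hΓα : Real.Gamma α ≠ 0 := (Real.Gamma_pos_of_pos hα0).ne'
  have hΓ2α : Real.Gamma (2 - α) ≠ 0 := (Real.Gamma_pos_of_pos (by linarith)).ne'
  have hf1 : ((i + j).factorial : ℝ) ≠ 0 := by exact_mod_cast (i + j).factorial_ne_zero
  have hf2 : ((j + 1).factorial : ℝ) ≠ 0 := by exact_mod_cast (j + 1).factorial_ne_zero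
  have hf3 : ((i - 1).factorial : ℝ) ≠ 0 := by exact_mod_cast (i - 1).factorial_ne_zero
  rw [hc]
  field_simp
  linear_combination hchoose
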